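/- For integers 0 ≤ r < m, the product identity ∏_{i=0}^{m-r-1} C(m+i, m-r-i)/C(2i+1, i) = ∏_{0 ≤ i ≤ j ≤ m-r-1} (r+i+j+1)/(i+j+1) holds. -/
import Mathlib


open Finset

private lemma fact_prod_aux (c t : ℕ) :
    c.factorial * ∏ k ∈ Finset.range t, (c + k + 1) = (c + t).factorial := by
  induction t with
  | zero => simp
  | succ t ih =>
    rw [Finset.prod_range_succ, ← mul_assoc, ih, ← Nat.add_assoc, Nat.factorial_succ]
    ring

private lemma even_odd_prod {M : Type*} [CommMonoid M] (f : ℕ → M) (n : ℕ) :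
    ∏ i ∈ Finset.range (2 * n), f i = ∏ i ∈ Finset.range n, (f (2 * i) * f (2 * i + 1)) := by
  induction n with
  | zero => simp
  | succ n ih =>
    have : 2 * (n + 1) = (2 * n + 1) + 1 := by ring
    rw [this, Finset.prod_range_succ, Finset.prod_range_succ, ih, Finset.prod_range_succ,
      mul_assoc]

/-- For integers `0 ≤ r < m`, the product identity
`∏_{i=0}^{m-r-1} C(m+i, m-r-i)/C(2i+1, i) = ∏_{0 ≤ i ≤ j ≤ m-r-1} (r+i+j+1)/(i+j+1)`. -/
theorem stmt11 (m r : ℕ) (hrm : r < m) :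
    ∏ i ∈ Finset.range (m - r),
        ((Nat.choose (m + i) (m - r - i) : ℚ) / (Nat.choose (2 * i + 1) i : ℚ)) =
      ∏ i ∈ Finset.range (m - r), ∏ j ∈ Finset.Icc i (m - r - 1),
        ((r + i + j + 1 : ℚ) / (i + j + 1 : ℚ)) := by
  obtain ⟨n, rfl⟩ : ∃ n, m = r + n + 1 := ⟨m - r - 1, by omega⟩
  have hmr : r + n + 1 - r = n + 1 := by omega
  rw [hmr]
  have hmr1 : n + 1 - 1 = n := by omega
  rw [hmr1]
  -- rewrite the LHS factors
  have hL : ∀ i ∈ Finset.range (n + 1),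
      ((Nat.choose (r + n + 1 + i) (n + 1 - i) : ℚ) / (Nat.choose (2 * i + 1) i : ℚ)) =
        (((r + n + 1 + i).factorial * (i.factorial * (i + 1).factorial) : ℕ) : ℚ) /
          ((((n + 1 - i).factorial * (r + 2 * i).factorial) * (2 * i + 1).factorial : ℕ) : ℚ) := by
    intro i hi
    have hi' : i ≤ n := by simpa [Nat.lt_succ_iff] using hi
    have hA : Nat.choose (r + n + 1 + i) (n + 1 - i) * ((n + 1 - i).factorial *
        (r + 2 * i).factorial) = (r + n + 1 + i).factorial := by
      have h1 : n + 1 - i ≤ r + n + 1 + i := by omega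
      have := Nat.choose_mul_factorial_mul_factorial h1
      have h2 : r + n + 1 + i - (n + 1 - i) = r + 2 * i := by omega
      rw [h2] at this
      rw [← this]; ring
    have hB : Nat.choose (2 * i + 1) i * (i.factorial * (i + 1).factorial) =
        (2 * i + 1).factorial := by
      have h1 : i ≤ 2 * i + 1 := by omega
      have := Nat.choose_mul_factorial_mul_factorial h1
      have h2 : 2 * i + 1 - i = i + 1 := by omega
      rw [h2] at this
      rw [← this]; ring
    have hBpos : (0:ℚ) < (Nat.choose (2 * i + 1) i : ℚ) := by
      exact_mod_cast Nat.choose_pos (by omega)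
    have hfpos : ∀ k : ℕ, (0:ℚ) < (k.factorial : ℚ) := fun k => by
      exact_mod_cast k.factorial_pos
    rw [div_eq_div_iff (ne_of_gt hBpos) (by positivity)]
    push_cast [← hA, ← hB]
    ring
  rw [Finset.prod_congr rfl hL]
  -- rewrite the RHS factors
  have hR : ∀ i ∈ Finset.range (n + 1),
      (∏ j ∈ Finset.Icc i n, ((r + i + j + 1 : ℚ) / (i + j + 1 : ℚ))) =
        (((r + n + 1 + i).factorial * (2 * i).factorial : ℕ) : ℚ) /
          (((r + 2 * i).factorial * (n + 1 + i).factorial : ℕ) : ℚ) := by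
    intro i hi
    have hi' : i ≤ n := by simpa [Nat.lt_succ_iff] using hi
    have hnum : (r + 2 * i).factorial * ∏ j ∈ Finset.Icc i n, (r + i + j + 1) =
        (r + n + 1 + i).factorial := by
      rw [← Finset.Ico_add_one_right_eq_Icc, Finset.prod_Ico_eq_prod_range]
      have h1 : ∀ k, r + i + (i + k) + 1 = (r + 2 * i) + k + 1 := by intro k; omega
      calc (r + 2 * i).factorial * ∏ k ∈ Finset.range (n + 1 - i), (r + i + (i + k) + 1)
          = (r + 2 * i).factorial * ∏ k ∈ Finset.range (n + 1 - i), ((r + 2 * i) + k + 1) := by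
            congr 1; exact Finset.prod_congr rfl fun k _ => by omega
        _ = (r + 2 * i + (n + 1 - i)).factorial := fact_prod_aux _ _
        _ = (r + n + 1 + i).factorial := by congr 1; omega
    have hden : (2 * i).factorial * ∏ j ∈ Finset.Icc i n, (i + j + 1) =
        (n + 1 + i).factorial := by
      rw [← Finset.Ico_add_one_right_eq_Icc, Finset.prod_Ico_eq_prod_range]
      calc (2 * i).factorial * ∏ k ∈ Finset.range (n + 1 - i), (i + (i + k) + 1)
          = (2 * i).factorial * ∏ k ∈ Finset.range (n + 1 - i), ((2 * i) + k + 1) := by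
            congr 1; exact Finset.prod_congr rfl fun k _ => by omega
        _ = (2 * i + (n + 1 - i)).factorial := fact_prod_aux _ _
        _ = (n + 1 + i).factorial := by congr 1; omega
    rw [Finset.prod_div_distrib]
    have hd0 : (∏ j ∈ Finset.Icc i n, ((i:ℚ) + j + 1)) ≠ 0 := by
      apply Finset.prod_ne_zero_iff.mpr; intro j hj; positivity
    have hfpos : ∀ k : ℕ, (0:ℚ) < (k.factorial : ℚ) := fun k => by
      exact_mod_cast k.factorial_pos
    rw [div_eq_div_iff hd0 (by positivity)]
    push_cast [← hnum, ← hden]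
    ring
  rw [Finset.prod_congr rfl hR]
  -- now both sides are ratios of natural number casts
  rw [Finset.prod_div_distrib, Finset.prod_div_distrib]
  have hne : ∀ (f : ℕ → ℕ), (∀ k, 0 < f k) →
      (∏ i ∈ Finset.range (n + 1), ((f i : ℚ))) ≠ 0 := fun f hf =>
    Finset.prod_ne_zero_iff.mpr fun i _ => by exact_mod_cast (hf i).ne'
  rw [div_eq_div_iff (hne _ fun k => by positivity)
    (hne _ fun k => by positivity)]
  have key : (∏ i ∈ Finset.range (n + 1), (r + n + 1 + i).factorial *
        (i.factorial * (i + 1).factorial)) *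
      ∏ i ∈ Finset.range (n + 1), (r + 2 * i).factorial * (n + 1 + i).factorial =
      (∏ i ∈ Finset.range (n + 1), (r + n + 1 + i).factorial * (2 * i).factorial) *
      ∏ i ∈ Finset.range (n + 1),
        ((n + 1 - i).factorial * (r + 2 * i).factorial) * (2 * i + 1).factorial := by
    simp only [Finset.prod_mul_distrib]
    have hGRev : (∏ i ∈ Finset.range (n + 1), (i + 1).factorial) =
        ∏ i ∈ Finset.range (n + 1), (n + 1 - i).factorial := by
      rw [← Finset.prod_range_reflect (fun j => (j + 1).factorial) (n + 1)]
      exact Finset.prod_congr rfl fun i hi => by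
        have : i ≤ n := by simpa [Nat.lt_succ_iff] using hi
        congr 1; omega
    have hFS : (∏ i ∈ Finset.range (n + 1), i.factorial) *
        (∏ i ∈ Finset.range (n + 1), (n + 1 + i).factorial) =
        ∏ i ∈ Finset.range (2 * (n + 1)), i.factorial := by
      have h2 : 2 * (n + 1) = (n + 1) + (n + 1) := by ring
      rw [h2, Finset.prod_range_add Nat.factorial (n + 1) (n + 1)]
    have hEO : (∏ i ∈ Finset.range (2 * (n + 1)), i.factorial) =
        (∏ i ∈ Finset.range (n + 1), (2 * i).factorial) *
        ∏ i ∈ Finset.range (n + 1), (2 * i + 1).factorial := by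
      rw [even_odd_prod Nat.factorial (n + 1), Finset.prod_mul_distrib]
    rw [hGRev]
    calc _ = ((∏ i ∈ Finset.range (n + 1), i.factorial) *
          (∏ i ∈ Finset.range (n + 1), (n + 1 + i).factorial)) *
          ((∏ i ∈ Finset.range (n + 1), (r + n + 1 + i).factorial) *
          (∏ i ∈ Finset.range (n + 1), (n + 1 - i).factorial) *
          (∏ i ∈ Finset.range (n + 1), (r + 2 * i).factorial)) := by ring
      _ = _ := by rw [hFS, hEO]; ring
  exact_mod_cast key
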